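/- arXiv:1711.09479 — 2 statements merged into one kernel-verified Lean document; each statement's English description precedes it below -/
import Mathlib

section
/- Let φ ∈ Hol(𝔻) ∩ C¹(closed 𝔻) with boundary zero set E ⊂ 𝕋. Then the map λ ↦ φ/(z − λ), from E to L²(𝕋), is continuous; i.e., if μ → λ with μ, λ ∈ E, then ‖φ/(z − μ) − φ/(z − λ)‖_{L²(𝕋)} → 0. -/
open MeasureTheory Metric Complex Filter Bornology

/-- The point `e^{iθ}` on the unit circle. -/
noncomputable def circPt (θ : ℝ) : ℂ := Complex.exp (θ * Complex.I)

/-- Membership in the Hardy space `H²` encoded via boundary Fourier series with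
nonnegative frequencies and square-summable coefficients. -/
def HardyPlus (g : ℂ → ℂ) : Prop :=
  ∃ c : ℕ → ℂ, Summable (fun n => ‖c n‖ ^ 2) ∧
    ∀ z : ℂ, ‖z‖ = 1 → HasSum (fun n => c n * z ^ (n : ℕ)) (g z)

/-- Membership in `H²₋ = conj (z H²)` encoded via boundary Fourier series with
negative frequencies and square-summable coefficients. -/
def HardyMinus (g : ℂ → ℂ) : Prop :=
  ∃ c : ℕ → ℂ, Summable (fun n => ‖c n‖ ^ 2) ∧
    ∀ z : ℂ, ‖z‖ = 1 → HasSum (fun n => c n * z ^ (-(n : ℤ) - 1)) (g z)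

/-- The mean value of `f` over the unit circle (equal to `f(0)` for the
holomorphic extension of a nice function). -/
noncomputable def meanVal (f : ℂ → ℂ) : ℂ :=
  (2 * Real.pi : ℂ)⁻¹ * ∫ θ in (0:ℝ)..(2 * Real.pi), f (circPt θ)

/-- The backward shift `S* f(z) = (f(z) - f(0)) / z`, with `f(0)` realized as the
circle mean of `f`. -/
noncomputable def Sstar (f : ℂ → ℂ) : ℂ → ℂ := fun z => (f z - meanVal f) / z

/-- The squared `H_*` norm `‖f φ‖²_{L²(𝕋)}`. -/
noncomputable def N2 (φ f : ℂ → ℂ) : ℝ :=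
  ∫ θ in (0:ℝ)..(2 * Real.pi), ‖f (circPt θ) * φ (circPt θ)‖ ^ 2

/-- The space `H_*(φ, ψ) = {f : f φ ∈ H², f ⬝ conj ψ ∈ H²₋}`. -/
def Hstar (φ ψ : ℂ → ℂ) : Set (ℂ → ℂ) :=
  {f | HardyPlus (fun z => f z * φ z) ∧
       HardyMinus (fun z => f z * (starRingEnd ℂ) (ψ z))}

/-- The Cauchy kernel `1 / (z - λ)`. -/
noncomputable def cauchyKer (l : ℂ) : ℂ → ℂ := fun z => (z - l)⁻¹

/-- `H₀`: the closed span, in the `H_*`-norm, of the Cauchy kernels at the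
points `Λ j`. -/
def H0 (φ : ℂ → ℂ) (Λ : ℕ → ℂ) : Set (ℂ → ℂ) :=
  {f | f ∈ Hstar φ φ ∧
    ∀ ε > (0:ℝ), ∃ (n : ℕ) (c : Fin n → ℂ) (k : Fin n → ℕ),
      N2 φ (fun z => f z - ∑ i, c i * cauchyKer (Λ (k i)) z) < ε}

lemma lip_of_contDiffOn {φ : ℂ → ℂ} (hsm : ContDiffOn ℝ 1 φ (closedBall (0:ℂ) 1)) :
    ∃ K : NNReal, LipschitzOnWith K φ (closedBall (0:ℂ) 1) := by
  have hconv : Convex ℝ (closedBall (0:ℂ) 1) := convex_closedBall _ _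
  have hu : UniqueDiffOn ℝ (closedBall (0:ℂ) 1) :=
    uniqueDiffOn_convex hconv (by simp [interior_closedBall])
  have hdiff : DifferentiableOn ℝ φ (closedBall (0:ℂ) 1) :=
    hsm.differentiableOn one_ne_zero
  have hcont : ContinuousOn (fderivWithin ℝ φ (closedBall (0:ℂ) 1)) (closedBall (0:ℂ) 1) :=
    hsm.continuousOn_fderivWithin hu (le_refl 1)
  obtain ⟨C, hC⟩ := (isCompact_closedBall (0:ℂ) 1).exists_bound_of_continuousOn hcont
  refine ⟨C.toNNReal, hconv.lipschitzOnWith_of_nnnorm_fderivWithin_le hdiff (fun x hx => ?_)⟩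
  have := hC x hx
  rw [← NNReal.coe_le_coe]
  exact le_trans this (Real.le_coe_toNNReal C)

lemma norm_circPt (θ : ℝ) : ‖circPt θ‖ = 1 := by
  simp [circPt, Complex.norm_exp]

lemma circPt_mem (θ : ℝ) : circPt θ ∈ closedBall (0:ℂ) 1 := by
  simp [mem_closedBall, dist_eq_norm, norm_circPt θ]


/-- the map `λ ↦ φ/(z-λ)` from the boundary zero set `E` of `φ`
to `L²(𝕋)` is continuous. -/
theorem stmt2 (φ : ℂ → ℂ)
    (hhol : DifferentiableOn ℂ φ (ball (0:ℂ) 1))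
    (hsm : ContDiffOn ℝ 1 φ (closedBall (0:ℂ) 1))
    (E : Set ℂ) (hE : E = {z : ℂ | ‖z‖ = 1 ∧ φ z = 0}) :
    ∀ lam ∈ E, Filter.Tendsto
      (fun μ : ℂ => ∫ θ in (0:ℝ)..(2 * Real.pi),
        ‖φ (circPt θ) / (circPt θ - μ) - φ (circPt θ) / (circPt θ - lam)‖ ^ 2)
      (nhdsWithin lam E) (nhds 0) := by
  intro lam hlam
  obtain ⟨L, hL⟩ := lip_of_contDiffOn hsm
  -- key uniform bound
  have key : ∀ μ ∈ E, ∀ θ : ℝ, ‖φ (circPt θ) / (circPt θ - μ)‖ ≤ L := by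
    intro μ hμ θ
    rw [hE] at hμ
    obtain ⟨hμ1, hμ2⟩ := hμ
    have hμball : μ ∈ closedBall (0:ℂ) 1 := by
      simp [mem_closedBall, dist_eq_norm, hμ1]
    by_cases h : circPt θ = μ
    · simp [h, hμ2]
    · have hd : (0:ℝ) < ‖circPt θ - μ‖ := by
        rw [norm_pos_iff]; exact sub_ne_zero.mpr h
      rw [norm_div, div_le_iff₀ hd]
      have hdist := hL.dist_le_mul _ (circPt_mem θ) _ hμball
      calc ‖φ (circPt θ)‖ = dist (φ (circPt θ)) (φ μ) := by
            simp [hμ2, dist_eq_norm]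
        _ ≤ L * dist (circPt θ) μ := hdist
        _ = L * ‖circPt θ - μ‖ := by rw [dist_eq_norm]
  have hlamE := hlam
  rw [hE] at hlamE
  obtain ⟨hlam1, hlam2⟩ := hlamE
  -- continuity of θ ↦ φ (circPt θ)
  have hφcirc : Continuous (fun θ : ℝ => φ (circPt θ)) := by
    have hc : Continuous circPt := by
      unfold circPt; exact Complex.continuous_exp.comp (continuous_ofReal.mul continuous_const)
    exact hsm.continuousOn.comp_continuous hc circPt_mem
  have hcircc : Continuous circPt := by
    unfold circPt; exact Complex.continuous_exp.comp (continuous_ofReal.mul continuous_const)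
  -- rewrite interval integral as set integral
  have h2pi : (0:ℝ) ≤ 2 * Real.pi := by positivity
  have hrw : ∀ μ : ℂ, (∫ θ in (0:ℝ)..(2 * Real.pi),
        ‖φ (circPt θ) / (circPt θ - μ) - φ (circPt θ) / (circPt θ - lam)‖ ^ 2)
      = ∫ θ in Set.Ioc (0:ℝ) (2 * Real.pi),
        ‖φ (circPt θ) / (circPt θ - μ) - φ (circPt θ) / (circPt θ - lam)‖ ^ 2 := by
    intro μ; rw [intervalIntegral.integral_of_le h2pi]
  simp only [hrw]
  have goal : Filter.Tendsto
      (fun μ : ℂ => ∫ θ in Set.Ioc (0:ℝ) (2 * Real.pi),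
        ‖φ (circPt θ) / (circPt θ - μ) - φ (circPt θ) / (circPt θ - lam)‖ ^ 2)
      (nhdsWithin lam E)
      (nhds (∫ _θ in Set.Ioc (0:ℝ) (2 * Real.pi), (0:ℝ))) := by
    apply MeasureTheory.tendsto_integral_filter_of_dominated_convergence
      (fun _ => ((2 * L) ^ 2 : ℝ))
    · -- measurability
      filter_upwards with μ
      apply Measurable.aestronglyMeasurable
      apply Measurable.pow_const
      apply Measurable.norm
      exact (hφcirc.measurable.div ((hcircc.measurable.sub measurable_const))).sub
        (hφcirc.measurable.div ((hcircc.measurable.sub measurable_const)))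
    · -- bound
      filter_upwards [self_mem_nhdsWithin] with μ hμ
      filter_upwards with θ
      have h1 := key μ hμ θ
      have h2 := key lam hlam θ
      have habs : ‖φ (circPt θ) / (circPt θ - μ) - φ (circPt θ) / (circPt θ - lam)‖ ≤ 2 * L := by
        calc ‖φ (circPt θ) / (circPt θ - μ) - φ (circPt θ) / (circPt θ - lam)‖
            ≤ ‖φ (circPt θ) / (circPt θ - μ)‖ + ‖φ (circPt θ) / (circPt θ - lam)‖ :=
              norm_sub_le _ _
          _ ≤ L + L := add_le_add h1 h2
          _ = 2 * L := by ring
      have hn : ‖(‖φ (circPt θ) / (circPt θ - μ) - φ (circPt θ) / (circPt θ - lam)‖ ^ 2 : ℝ)‖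
          = ‖φ (circPt θ) / (circPt θ - μ) - φ (circPt θ) / (circPt θ - lam)‖ ^ 2 := by
        rw [Real.norm_eq_abs, _root_.abs_of_nonneg (by positivity)]
      rw [hn]
      exact pow_le_pow_left₀ (norm_nonneg _) habs 2
    · exact integrable_const _
    · -- pointwise limit
      filter_upwards with θ
      by_cases h : circPt θ = lam
      · have : φ (circPt θ) = 0 := by rw [h]; exact hlam2
        have : (fun μ : ℂ => ‖φ (circPt θ) / (circPt θ - μ) - φ (circPt θ) / (circPt θ - lam)‖ ^ 2)
            = fun _ => (0:ℝ) := by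
          funext μ; simp [this]
        rw [this]
        exact tendsto_const_nhds
      · have hcont : ContinuousAt (fun μ : ℂ =>
            ‖φ (circPt θ) / (circPt θ - μ) - φ (circPt θ) / (circPt θ - lam)‖ ^ 2) lam := by
          apply ContinuousAt.pow
          apply ContinuousAt.norm
          apply ContinuousAt.sub
          · exact ContinuousAt.div continuousAt_const
              (continuousAt_const.sub continuousAt_id) (sub_ne_zero.mpr h)
          · exact continuousAt_const
        have := hcont.tendsto.mono_left (nhdsWithin_le_nhds (s := E))
        simpa using this
  simpa using goal
end

section
/- A hypercyclic bounded operator T on a complex Banach space X of dimension ≥ 1 cannot be of the form I + R with R of finite rank, since the adjoint of I + R has an eigenvalue, and a hypercyclic operator's adjoint has no eigenvalues. -/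
open MeasureTheory Metric Complex Filter Bornology

lemma not_dense_geom (μ c : ℂ) : ¬ Dense (Set.range fun n : ℕ => μ ^ n * c) := by
  intro h
  rcases le_or_gt ‖μ‖ 1 with hμ | hμ
  · obtain ⟨y, hyb, ⟨n, rfl⟩⟩ :=
      (Metric.dense_iff.mp h) ((‖c‖ + 1 : ℝ) : ℂ) 1 one_pos
    have h1 : ‖μ ^ n * c‖ ≤ ‖c‖ := by
      rw [norm_mul, norm_pow]
      have := pow_le_one₀ (norm_nonneg μ) hμ (n := n)
      nlinarith [norm_nonneg c]
    have h2 : (1 : ℝ) ≤ dist (μ ^ n * c) ((‖c‖ + 1 : ℝ) : ℂ) := by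
      have : ‖((‖c‖ + 1 : ℝ) : ℂ)‖ - ‖μ ^ n * c‖ ≤ ‖((‖c‖ + 1 : ℝ) : ℂ) - μ ^ n * c‖ :=
        norm_sub_norm_le _ _
      have hn : ‖((‖c‖ + 1 : ℝ) : ℂ)‖ = ‖c‖ + 1 := by
        rw [Complex.norm_real]
        exact abs_of_nonneg (by positivity)
      rw [dist_eq_norm, ← norm_neg]
      simp only [neg_sub]
      linarith
    exact absurd (Metric.mem_ball.mp hyb) (not_lt.mpr h2)
  · by_cases hc : c = 0
    · subst hc
      obtain ⟨y, hyb, ⟨n, rfl⟩⟩ := (Metric.dense_iff.mp h) 1 1 one_pos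
      simp only [mul_zero, Metric.mem_ball, dist_zero_left] at hyb
      simp at hyb
    · obtain ⟨y, hyb, ⟨n, rfl⟩⟩ :=
        (Metric.dense_iff.mp h) 0 ‖c‖ (norm_pos_iff.mpr hc)
      rw [Metric.mem_ball, dist_zero_right, norm_mul, norm_pow] at hyb
      have : (1:ℝ) ≤ ‖μ‖ ^ n := one_le_pow₀ hμ.le
      nlinarith [norm_pos_iff.mpr hc]

set_option synthInstance.maxHeartbeats 1000000 in
set_option maxHeartbeats 1600000 in
lemma exists_dual_eig (X : Type) [NormedAddCommGroup X] [NormedSpace ℂ X]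
    [CompleteSpace X] [Nontrivial X] (R : X →L[ℂ] X)
    (hR : FiniteDimensional ℂ (LinearMap.range (R : X →ₗ[ℂ] X))) :
    ∃ (f : X →L[ℂ] ℂ) (lam : ℂ), f ≠ 0 ∧
      ∀ y, f (((1 : X →L[ℂ] X) + R) y) = lam * f y := by
  haveI := hR
  set W := LinearMap.range (R : X →ₗ[ℂ] X) with hW
  let Rc : X →L[ℂ] W := R.codRestrict W (fun x => LinearMap.mem_range_self _ x)
  let Φ : (X →L[ℂ] ℂ) →ₗ[ℂ] (X →L[ℂ] ℂ) :=
    { toFun := fun f => f.comp R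
      map_add' := fun f g => by ext x; simp
      map_smul' := fun c f => by ext x; simp }
  let E : (W →L[ℂ] ℂ) →ₗ[ℂ] (X →L[ℂ] ℂ) :=
    { toFun := fun g => g.comp Rc
      map_add' := fun f g => by ext x; simp
      map_smul' := fun c f => by ext x; simp }
  haveI : FiniteDimensional ℂ (W →L[ℂ] ℂ) :=
    (LinearMap.toContinuousLinearMap (E := W) (F' := ℂ)).finiteDimensional
  have hΦrange : LinearMap.range Φ ≤ LinearMap.range E := by
    rintro _ ⟨f, rfl⟩
    exact ⟨f.comp W.subtypeL, by ext x; simp [E, Φ, Rc]⟩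
  -- dual nontrivial
  obtain ⟨z, hz⟩ := exists_ne (0 : X)
  obtain ⟨g0, hg01, hg02⟩ := exists_dual_vector ℂ z (norm_ne_zero_iff.mpr hz)
  haveI : Nontrivial (X →L[ℂ] ℂ) := by
    refine ⟨g0, 0, fun h => hz ?_⟩
    have : g0 z = 0 := by rw [h]; rfl
    rw [hg02] at this
    exact norm_eq_zero.mp (Complex.ofReal_eq_zero.mp this)
  by_cases hfin : FiniteDimensional ℂ (X →L[ℂ] ℂ)
  · let A : Module.End ℂ (X →L[ℂ] ℂ) :=
      { toFun := fun f => f.comp ((1 : X →L[ℂ] X) + R)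
        map_add' := fun f g => by ext x; simp; ring
        map_smul' := fun c f => by ext x; simp }
    obtain ⟨lam, hlam⟩ := Module.End.exists_eigenvalue A
    obtain ⟨f, hf⟩ := hlam.exists_hasEigenvector
    refine ⟨f, lam, hf.2, fun y => ?_⟩
    have h1 : A f = lam • f := Module.End.mem_eigenspace_iff.mp hf.1
    have := ContinuousLinearMap.ext_iff.mp h1 y
    simpa [A] using this
  · have hninj : ¬ Function.Injective Φ := by
      intro hinj
      haveI : FiniteDimensional ℂ (LinearMap.range E) := inferInstance
      have hfd : FiniteDimensional ℂ (LinearMap.range Φ) :=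
        Submodule.finiteDimensional_of_le (S₂ := LinearMap.range E) hΦrange
      exact hfin (@LinearEquiv.finiteDimensional ℂ _ _ _ _ _ _ _
        (LinearEquiv.ofInjective Φ hinj).symm hfd)
    have hker : LinearMap.ker Φ ≠ ⊥ := fun h => hninj (LinearMap.ker_eq_bot.mp h)
    obtain ⟨f, hfmem, hf0⟩ := Submodule.exists_mem_ne_zero_of_ne_bot hker
    refine ⟨f, 1, hf0, fun y => ?_⟩
    have hΦ0 : f (R y) = 0 := by
      have := LinearMap.mem_ker.mp hfmem
      have := ContinuousLinearMap.ext_iff.mp this y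
      simpa [Φ] using this
    simp [one_mul, map_add, hΦ0]

/-- an operator of the form `I + R` with `R` of finite rank is never
hypercyclic on a complex Banach space of dimension ≥ 1. -/
theorem stmt13 (X : Type) [NormedAddCommGroup X] [NormedSpace ℂ X]
    [CompleteSpace X] [Nontrivial X]
    (R : X →L[ℂ] X)
    (hR : FiniteDimensional ℂ (LinearMap.range (R : X →ₗ[ℂ] X))) :
    ¬ ∃ x : X, Dense (Set.range fun n : ℕ => (((1 : X →L[ℂ] X) + R) ^ n) x) := by
  rintro ⟨x, hx⟩
  obtain ⟨f, lam, hf0, hfe⟩ := exists_dual_eig X R hR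
  set T : X →L[ℂ] X := (1 : X →L[ℂ] X) + R with hT
  obtain ⟨x0, hx0⟩ : ∃ x0, f x0 ≠ 0 := by
    by_contra h
    push_neg at h
    exact hf0 (ContinuousLinearMap.ext fun y => by simp [h y])
  have hsurj : Function.Surjective f := by
    intro u
    refine ⟨(u / f x0) • x0, ?_⟩
    simp [div_mul_cancel₀ _ hx0]
  have horb : ∀ n : ℕ, f ((T ^ n) x) = lam ^ n * f x := by
    intro n
    induction n with
    | zero => simp
    | succ n ih =>
      have : (T ^ (n + 1)) x = T ((T ^ n) x) := by
        rw [pow_succ']; rfl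
      rw [this, hfe, ih, pow_succ']
      ring
  have hd : Dense (Set.range fun n : ℕ => lam ^ n * f x) := by
    have him : (Set.range fun n : ℕ => lam ^ n * f x) =
        f '' (Set.range fun n : ℕ => (T ^ n) x) := by
      have hfun : (fun n : ℕ => lam ^ n * f x) = f ∘ fun n : ℕ => (T ^ n) x :=
        funext fun n => (horb n).symm
      rw [hfun, Set.range_comp]
    rw [him]
    intro z
    obtain ⟨y, rfl⟩ := hsurj z
    exact image_closure_subset_closure_image f.continuous ⟨y, hx y, rfl⟩
  exact not_dense_geom lam (f x) hd
end
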